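/- Fix constants b > 0 with b ≠ 1. Suppose ζ = α(1 − δ) with δ = b/ln(1/α), and c = c(α) satisfies c·α/ln(1/α) → 2 as α → 0⁺. Then ψ″(ζ) = c/(1−α)⁴ − 2/(α−ζ) − 1/ζ − 1/(1−2α+ζ) is negative for sufficiently small α if b < 1, and positive for sufficiently small α if b > 1. -/

import Mathlib

open Filter

/-- If `c α / (ln(1/α)/α) → 2` as `α → 0⁺`, and `ζ = α(1 - b/ln(1/α))` for a
constant `b > 0`, `b ≠ 1`, then for sufficiently small `α`, `ψ″(ζ)` is
negative if `b < 1` and positive if `b > 1`. -/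
theorem psi_second_deriv_sign (b : ℝ) (hb : 0 < b) (hb1 : b ≠ 1) (c : ℝ → ℝ)
    (hc : Tendsto (fun α => c α * α / Real.log (1 / α))
      (nhdsWithin 0 (Set.Ioi 0)) (nhds 2)) :
    ∃ α₀ > 0, ∀ α : ℝ, 0 < α → α < α₀ →
      (b < 1 →
        c α / (1 - α) ^ 4 - 2 / (α - α * (1 - b / Real.log (1 / α))) -
          1 / (α * (1 - b / Real.log (1 / α))) -
          1 / (1 - 2 * α + α * (1 - b / Real.log (1 / α))) < 0) ∧
      (1 < b →
        0 < c α / (1 - α) ^ 4 - 2 / (α - α * (1 - b / Real.log (1 / α))) -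
          1 / (α * (1 - b / Real.log (1 / α))) -
          1 / (1 - 2 * α + α * (1 - b / Real.log (1 / α)))) := by
  set L : ℝ → ℝ := fun α => Real.log (1 / α) with hLdef
  set E : ℝ → ℝ := fun α =>
    c α / (1 - α) ^ 4 - 2 / (α - α * (1 - b / L α)) -
      1 / (α * (1 - b / L α)) - 1 / (1 - 2 * α + α * (1 - b / L α)) with hEdef
  have hbne : b ≠ 0 := ne_of_gt hb
  -- L tends to atTop
  have hL : Tendsto L (nhdsWithin 0 (Set.Ioi 0)) atTop := by
    have h1 : Tendsto Real.log (nhdsWithin 0 (Set.Ioi 0)) atBot :=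
      Real.tendsto_log_nhdsGT_zero
    have h2 := tendsto_neg_atBot_atTop.comp h1
    refine h2.congr fun α => ?_
    simp [hLdef, one_div, Real.log_inv]
  -- α → 0
  have hid : Tendsto (fun α : ℝ => α) (nhdsWithin 0 (Set.Ioi 0)) (nhds 0) :=
    tendsto_id.mono_left nhdsWithin_le_nhds
  -- 1/L → 0
  have hinvL : Tendsto (fun α => (L α)⁻¹) (nhdsWithin 0 (Set.Ioi 0)) (nhds 0) :=
    hL.inv_tendsto_atTop
  -- q = α / L → 0
  have hq : Tendsto (fun α => α / L α) (nhdsWithin 0 (Set.Ioi 0)) (nhds 0) := by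
    have := hid.mul hinvL
    simpa [div_eq_mul_inv] using this
  -- 1/(L - b) → 0
  have hinvLb : Tendsto (fun α => 1 / (L α - b)) (nhdsWithin 0 (Set.Ioi 0)) (nhds 0) := by
    have : Tendsto (fun α => L α - b) (nhdsWithin 0 (Set.Ioi 0)) atTop :=
      hL.atTop_add tendsto_const_nhds
    simp only [one_div]; exact this.inv_tendsto_atTop
  -- (1-α)^4 → 1
  have hpow : Tendsto (fun α : ℝ => (1 - α) ^ 4) (nhdsWithin 0 (Set.Ioi 0)) (nhds 1) := by
    have : Tendsto (fun α : ℝ => (1 - α) ^ 4) (nhds 0) (nhds ((1 - 0 : ℝ) ^ 4)) := by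
      exact (continuous_const.sub continuous_id).pow 4 |>.tendsto 0
    simpa using this.mono_left nhdsWithin_le_nhds
  -- 1 - α - α*b/L → 1
  have hden : Tendsto (fun α => 1 - α - α * b / L α) (nhdsWithin 0 (Set.Ioi 0)) (nhds 1) := by
    have h2 : Tendsto (fun α => α * b / L α) (nhdsWithin 0 (Set.Ioi 0)) (nhds 0) := by
      have := (hid.mul_const b).mul hinvL
      simpa [div_eq_mul_inv] using this
    have h3 := ((tendsto_const_nhds : Tendsto (fun _ : ℝ => (1:ℝ))
      (nhdsWithin 0 (Set.Ioi 0)) (nhds 1)).sub hid).sub h2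
    simpa using h3
  -- the auxiliary function h and its limit
  have hh : Tendsto (fun α => (c α * α / L α) / (1 - α) ^ 4 - 2 / b - 1 / (L α - b)
      - (α / L α) / (1 - α - α * b / L α)) (nhdsWithin 0 (Set.Ioi 0))
      (nhds (2 / 1 - 2 / b - 0 - 0 / 1)) := by
    exact (((hc.div hpow one_ne_zero).sub tendsto_const_nhds).sub hinvLb).sub
      (hq.div hden one_ne_zero)
  -- eventual facts
  have hev : ∀ᶠ α in nhdsWithin 0 (Set.Ioi 0),
      0 < α ∧ α < 1/4 ∧ b < L α ∧ 1 < L α := by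
    filter_upwards [self_mem_nhdsWithin, hid.eventually_lt_const (by norm_num : (0:ℝ) < 1/4),
      hL.eventually_gt_atTop b, hL.eventually_gt_atTop 1] with α h1 h2 h3 h4
    exact ⟨h1, h2, h3, h4⟩
  -- E α * (α / L α) equals h α eventually
  have hkey : ∀ᶠ α in nhdsWithin 0 (Set.Ioi 0),
      E α * (α / L α) = (c α * α / L α) / (1 - α) ^ 4 - 2 / b - 1 / (L α - b)
        - (α / L α) / (1 - α - α * b / L α) ∧ 0 < α / L α := by
    filter_upwards [hev] with α ⟨h1, h2, h3, h4⟩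
    have hLpos : 0 < L α := lt_trans one_pos h4
    have hLne : L α ≠ 0 := ne_of_gt hLpos
    have hane : α ≠ 0 := ne_of_gt h1
    have h1a : (1 : ℝ) - α ≠ 0 := by nlinarith
    have hfrac : b / L α < 1 := (div_lt_one hLpos).mpr h3
    have hfracpos : 0 < b / L α := div_pos hb hLpos
    have h1f : (1 : ℝ) - b / L α ≠ 0 := by nlinarith
    have hLb : L α - b ≠ 0 := by nlinarith
    have hden2 : 1 - 2 * α + α * (1 - b / L α) ≠ 0 := by nlinarith
    constructor
    · have e2 : α - α * (1 - b / L α) = α * b / L α := by ring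
      have e4 : 1 - 2 * α + α * (1 - b / L α) = 1 - α - α * b / L α := by ring
      have t1 : c α / (1 - α) ^ 4 * (α / L α) = (c α * α / L α) / (1 - α) ^ 4 := by
        rw [div_mul_div_comm, div_div, mul_comm ((1 - α) ^ 4) (L α)]
      have t2 : 2 / (α * b / L α) * (α / L α) = 2 / b := by
        field_simp
      have t3 : 1 / (α * (1 - b / L α)) * (α / L α) = 1 / (L α - b) := by
        rw [div_mul_div_comm, one_mul]
        rw [div_eq_div_iff (by positivity) (by nlinarith)]
        field_simp
      have t4 : 1 / (1 - α - α * b / L α) * (α / L α)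
          = (α / L α) / (1 - α - α * b / L α) := by
        rw [one_div, inv_mul_eq_div]
      simp only [hEdef, e2, e4, sub_mul]
      rw [t1, t2, t3, t4]
    · exact div_pos h1 hLpos
  have hg : Tendsto (fun α => E α * (α / L α)) (nhdsWithin 0 (Set.Ioi 0))
      (nhds (2 / 1 - 2 / b - 0 - 0 / 1)) :=
    hh.congr' (by filter_upwards [hkey] with α h using h.1.symm)
  -- conclude by sign of the limit
  rcases lt_or_gt_of_ne hb1 with hblt | hbgt
  · -- b < 1 : limit is negative
    have hlim : (2 / 1 - 2 / b - 0 - 0 / 1 : ℝ) < 0 := by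
      have : (2 : ℝ) < 2 / b := by
        rw [lt_div_iff₀ hb]; nlinarith
      linarith
    have hneg : ∀ᶠ α in nhdsWithin 0 (Set.Ioi 0), E α < 0 := by
      filter_upwards [hg.eventually_lt_const hlim, hkey] with α hlt ⟨_, hqpos⟩
      by_contra hcon
      push_neg at hcon
      nlinarith [mul_nonneg hcon hqpos.le]
    rw [Filter.Eventually, Metric.mem_nhdsWithin_iff] at hneg
    obtain ⟨ε, hε, hsub⟩ := hneg
    refine ⟨ε, hε, fun α hα hαε => ?_⟩
    have : E α < 0 := hsub ⟨by simpa [Real.dist_eq, abs_of_pos hα] using hαε, hα⟩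
    exact ⟨fun _ => this, fun h => absurd h (by linarith)⟩
  · -- 1 < b : limit is positive
    have hlim : (0 : ℝ) < 2 / 1 - 2 / b - 0 - 0 / 1 := by
      have : 2 / b < 2 := by
        rw [div_lt_iff₀ hb]; nlinarith
      linarith
    have hpos : ∀ᶠ α in nhdsWithin 0 (Set.Ioi 0), 0 < E α := by
      filter_upwards [hg.eventually_const_lt hlim, hkey] with α hlt ⟨_, hqpos⟩
      by_contra hcon
      push_neg at hcon
      nlinarith [mul_nonneg (neg_nonneg.mpr hcon) hqpos.le]
    rw [Filter.Eventually, Metric.mem_nhdsWithin_iff] at hpos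
    obtain ⟨ε, hε, hsub⟩ := hpos
    refine ⟨ε, hε, fun α hα hαε => ?_⟩
    have : 0 < E α := hsub ⟨by simpa [Real.dist_eq, abs_of_pos hα] using hαε, hα⟩
    exact ⟨fun h => absurd h (by linarith), fun _ => this⟩
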